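/- For every n ≥ 1 and all p, q ≥ 1 there exists a bound N = N(n, p, q) ∈ ℕ with the following property. Let x(t) = (x₁(t), …, xₙ(t)) : (ℂ,0) → (ℂⁿ,0) be any germ of an analytic vector-function satisfying a system Sᵢ(x(t), t)·xᵢ′(t) = Qᵢ(x(t), t), i = 1, …, n, where the Sᵢ and Qᵢ are polynomials in (x, t) of degree at most q and Sᵢ(0,0) ≠ 0 for all i. Let P be any polynomial in (x, t) of degree at most p such that p(t) := P(x(t), t) is not identically zero. Then the multiplicity of the zero of p(t) at t = 0 (its order of vanishing) is at most N. -/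

import Mathlib

open MvPolynomial Filter Finset

variable {n : ℕ}

/-- Analyticity of polynomial evaluation along analytic curves. -/
lemma analyticAt_eval_curve {σ : Type*} [Fintype σ] {γ : ℂ → σ → ℂ} {t₀ : ℂ}
    (h : ∀ v, AnalyticAt ℂ (fun s => γ s v) t₀) (F : MvPolynomial σ ℂ) :
    AnalyticAt ℂ (fun s => eval (γ s) F) t₀ := by
  induction F using MvPolynomial.induction_on with
  | C a => simpa using analyticAt_const
  | add f g hf hg => simpa [eval_add] using hf.fun_add hg
  | mul_X f v hf => simpa [eval_mul] using hf.fun_mul (h v)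

/-- Chain rule for polynomial evaluation along differentiable curves. -/
lemma hasDerivAt_eval_curve {σ : Type*} [Fintype σ] [DecidableEq σ] {γ : ℂ → σ → ℂ}
    {γ' : σ → ℂ} {t : ℂ} (h : ∀ v, HasDerivAt (fun s => γ s v) (γ' v) t)
    (F : MvPolynomial σ ℂ) :
    HasDerivAt (fun s => eval (γ s) F) (∑ v, eval (γ t) (pderiv v F) * γ' v) t := by
  induction F using MvPolynomial.induction_on with
  | C a => simpa using hasDerivAt_const t (a : ℂ)
  | add f g hf hg =>
      have := hf.fun_add hg
      simpa [eval_add, Finset.sum_add_distrib, add_mul] using this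
  | mul_X f v hf =>
      have := hf.fun_mul (h v)
      have e : (∑ w, eval (γ t) (pderiv w (f * X v)) * γ' w)
          = (∑ w, eval (γ t) (pderiv w f) * γ' w) * γ t v + eval (γ t) f * γ' v := by
        simp only [pderiv_mul, pderiv_X, eval_add, eval_mul, add_mul, Finset.sum_add_distrib,
          Finset.sum_mul]
        congr 1
        · apply Finset.sum_congr rfl
          intro w _
          simp [eval_X]; ring
        · rw [Finset.sum_eq_single v]
          · simp [Pi.single_eq_same]
          · intro w _ hw
            simp [Pi.single_eq_of_ne (Ne.symm hw)]
          · simp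
      rw [e]
      simpa [eval_mul, eval_X] using this

lemma analyticAt_deriv' {f : ℂ → ℂ} {z : ℂ} (hf : AnalyticAt ℂ f z) :
    AnalyticAt ℂ (deriv f) z := by
  obtain ⟨s, hs, hos⟩ := hf.exists_mem_nhds_analyticOnNhd
  exact hos.deriv z (mem_of_mem_nhds hs)

lemma order_eq_zero_iff' {g : ℂ → ℂ} (hg : AnalyticAt ℂ g 0) : analyticOrderAt g 0 = 0 ↔ g 0 ≠ 0 := by
  rw [show ((0:ℕ∞)) = ((0:ℕ):ℕ∞) by rfl, hg.analyticOrderAt_eq_natCast]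
  constructor
  · rintro ⟨w, hw, hw0, heq⟩
    have h2 := heq.self_of_nhds
    simp only [sub_zero, pow_zero, one_smul] at h2
    rw [h2]; exact hw0
  · intro h
    exact ⟨g, hg, h, by filter_upwards with z; simp⟩

lemma order_step {g h u : ℂ → ℂ} (hg : AnalyticAt ℂ g 0) (hh : AnalyticAt ℂ h 0)
    (hu : AnalyticAt ℂ u 0) (hu0 : u 0 ≠ 0)
    (heq : ∀ᶠ t in nhds (0:ℂ), h t = u t * deriv g t)
    (m : ℕ) (hord : analyticOrderAt g 0 = ((m+1 : ℕ) : ℕ∞)) : analyticOrderAt h 0 = (m : ℕ∞) := by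
  obtain ⟨w, hw, hw0, hweq⟩ := (hg.analyticOrderAt_eq_natCast (n := m+1)).mp hord
  rw [hh.analyticOrderAt_eq_natCast]
  refine ⟨fun z => u z * ((m+1) * w z + z * deriv w z), hu.mul
    ((analyticAt_const.mul hw).add (analyticAt_id.mul (analyticAt_deriv' hw))), ?_, ?_⟩
  · show u 0 * (((m:ℂ)+1) * w 0 + 0 * deriv w 0) ≠ 0
    rw [zero_mul, add_zero]
    exact mul_ne_zero hu0 (mul_ne_zero (by exact_mod_cast (by omega : m + 1 ≠ 0)) hw0)
  · have hdg : deriv g =ᶠ[nhds (0:ℂ)] deriv (fun z => (z - 0) ^ (m+1) • w z) :=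
      Filter.EventuallyEq.deriv hweq
    filter_upwards [heq, hdg, hw.eventually_analyticAt] with z hz1 hz2 hz3
    have hwd : DifferentiableAt ℂ w z := hz3.differentiableAt
    have : deriv (fun z => (z - 0) ^ (m+1) • w z) z
        = (m+1) * z ^ m * w z + z ^ (m+1) * deriv w z := by
      simp only [sub_zero, smul_eq_mul]
      rw [deriv_fun_mul (by fun_prop) hwd, deriv_pow_field]
      simp only [Nat.add_sub_cancel_left, Nat.add_sub_cancel]
      push_cast
      ring
    rw [hz1, hz2, this]
    simp only [sub_zero, smul_eq_mul]
    ring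


/-- The derivation associated to the ODE system. -/
noncomputable def DerOp {R : Type*} [CommSemiring R] {n : ℕ}
    (S Q : Fin n → MvPolynomial (Fin n ⊕ Unit) R) (F : MvPolynomial (Fin n ⊕ Unit) R) :
    MvPolynomial (Fin n ⊕ Unit) R :=
  (∏ i, S i) * pderiv (Sum.inr ()) F
    + ∑ i, Q i * (∏ j ∈ Finset.univ.erase i, S j) * pderiv (Sum.inl i) F

lemma map_DerOp {R S' : Type*} [CommSemiring R] [CommSemiring S'] (φ : R →+* S') {n : ℕ}
    (S Q : Fin n → MvPolynomial (Fin n ⊕ Unit) R) (F : MvPolynomial (Fin n ⊕ Unit) R) :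
    map φ (DerOp S Q F)
      = DerOp (fun i => map φ (S i)) (fun i => map φ (Q i)) (map φ F) := by
  simp [DerOp, map_add, map_mul, map_prod, map_sum, pderiv_map]

noncomputable def toFS {n k : ℕ} (e : (Fin n ⊕ Unit) → Fin (k+1)) : (Fin n ⊕ Unit) →₀ ℕ :=
  Finsupp.equivFunOnFinite.symm (fun v => (e v : ℕ))

lemma toFS_apply {n k : ℕ} (e : (Fin n ⊕ Unit) → Fin (k+1)) (v) : toFS e v = e v := rfl

lemma toFS_injective {n k : ℕ} : Function.Injective (toFS (n := n) (k := k)) := by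
  intro a b hab
  funext v
  have : toFS a v = toFS b v := by rw [hab]
  rw [toFS_apply, toFS_apply] at this
  exact Fin.ext this

lemma sum_monomial_eq {n d : ℕ} (f : MvPolynomial (Fin n ⊕ Unit) ℂ) (hf : f.totalDegree ≤ d) :
    ∑ e : (Fin n ⊕ Unit) → Fin (d+1), monomial (toFS e) (coeff (toFS e) f) = f := by
  classical
  have hsub : f.support ⊆ Finset.univ.image (toFS (n := n) (k := d)) := by
    intro s hs
    have h1 : ∀ v, s v ≤ d := by
      intro v
      refine le_trans ?_ (le_trans (le_totalDegree hs) hf)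
      by_cases hv : s v = 0
      · simp [hv]
      · rw [Finsupp.sum]
        exact Finset.single_le_sum (f := fun w => s w) (fun _ _ => Nat.zero_le _)
          (Finsupp.mem_support_iff.mpr hv)
    refine Finset.mem_image.mpr ⟨fun v => ⟨s v, Nat.lt_succ_of_le (h1 v)⟩, Finset.mem_univ _, ?_⟩
    ext v
    rw [toFS_apply]
  calc ∑ e : (Fin n ⊕ Unit) → Fin (d+1), monomial (toFS e) (coeff (toFS e) f)
      = ∑ s ∈ Finset.univ.image (toFS (n := n) (k := d)), monomial s (coeff s f) :=
        (Finset.sum_image (f := fun s => monomial s (coeff s f)) (g := toFS) (fun a _ b _ h => toFS_injective h)).symm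
    _ = ∑ s ∈ f.support, monomial s (coeff s f) :=
        (Finset.sum_subset hsub (fun s _ hs => by
          rw [MvPolynomial.notMem_support_iff.mp hs, map_zero])).symm
    _ = f := (as_sum f).symm

variable (n p q : ℕ)

abbrev GVar := ((Fin n × Bool) × ((Fin n ⊕ Unit) → Fin (q+1))) ⊕ ((Fin n ⊕ Unit) → Fin (p+1))

noncomputable def genS (i : Fin n) : MvPolynomial (Fin n ⊕ Unit) (MvPolynomial (GVar n p q) ℂ) :=
  ∑ e : (Fin n ⊕ Unit) → Fin (q+1), monomial (toFS e) (X (Sum.inl ((i, false), e)))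

noncomputable def genQ (i : Fin n) : MvPolynomial (Fin n ⊕ Unit) (MvPolynomial (GVar n p q) ℂ) :=
  ∑ e : (Fin n ⊕ Unit) → Fin (q+1), monomial (toFS e) (X (Sum.inl ((i, true), e)))

noncomputable def genP : MvPolynomial (Fin n ⊕ Unit) (MvPolynomial (GVar n p q) ℂ) :=
  ∑ e : (Fin n ⊕ Unit) → Fin (p+1), monomial (toFS e) (X (Sum.inr e))

noncomputable def genc (k : ℕ) : MvPolynomial (GVar n p q) ℂ :=
  constantCoeff ((DerOp (genS n p q) (genQ n p q))^[k] (genP n p q))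

/-- The assignment specializing the generic coefficients to a concrete system. -/
noncomputable def asgn (S Q : Fin n → MvPolynomial (Fin n ⊕ Unit) ℂ) (P : MvPolynomial (Fin n ⊕ Unit) ℂ) :
    GVar n p q → ℂ :=
  Sum.elim (fun z => coeff (toFS z.2) (cond z.1.2 (Q z.1.1) (S z.1.1)))
    (fun e => coeff (toFS e) P)

lemma exists_stab : ∃ N : ℕ, ∀ k : ℕ,
    genc n p q k ∈ Ideal.span (genc n p q '' Set.Iio N) := by
  have hN : IsNoetherian (MvPolynomial (GVar n p q) ℂ) (MvPolynomial (GVar n p q) ℂ) :=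
    inferInstance
  obtain ⟨N, hstab⟩ := monotone_stabilizes_iff_noetherian.mpr hN
    ⟨fun m => Ideal.span (genc n p q '' Set.Iio m), by
      intro a b hab
      exact Ideal.span_mono (Set.image_mono (fun x hx => lt_of_lt_of_le hx hab))⟩
  refine ⟨N, fun k => ?_⟩
  by_cases hk : k < N
  · exact Ideal.subset_span (Set.mem_image_of_mem _ hk)
  · have h1 : genc n p q k ∈ Ideal.span (genc n p q '' Set.Iio (k+1)) :=
      Ideal.subset_span (Set.mem_image_of_mem _ (Nat.lt_succ_self k))
    have h2 := hstab (k+1) (by omega)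
    change Ideal.span (genc n p q '' Set.Iio N) = Ideal.span (genc n p q '' Set.Iio (k+1)) at h2
    rwa [← h2] at h1

variable {n p q} in
lemma map_genS (S Q P : _) (hS : ∀ i, (S i : MvPolynomial (Fin n ⊕ Unit) ℂ).totalDegree ≤ q)
    (i : Fin n) :
    map (eval (asgn n p q S Q P)) (genS n p q i) = S i := by
  rw [genS, map_sum]
  simp only [map_monomial, eval_X, asgn, Sum.elim_inl, cond_false]
  exact sum_monomial_eq _ (hS i)

variable {n p q} in
lemma map_genQ (S Q P : _) (hQ : ∀ i, (Q i : MvPolynomial (Fin n ⊕ Unit) ℂ).totalDegree ≤ q)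
    (i : Fin n) :
    map (eval (asgn n p q S Q P)) (genQ n p q i) = Q i := by
  rw [genQ, map_sum]
  simp only [map_monomial, eval_X, asgn, Sum.elim_inl, cond_true]
  exact sum_monomial_eq _ (hQ i)

variable {n p q} in
lemma map_genP (S Q : _) (P : MvPolynomial (Fin n ⊕ Unit) ℂ) (hP : P.totalDegree ≤ p) :
    map (eval (asgn n p q S Q P)) (genP n p q) = P := by
  rw [genP, map_sum]
  simp only [map_monomial, eval_X, asgn, Sum.elim_inr]
  exact sum_monomial_eq _ hP

variable {n p q} in
lemma eval_genc (S Q : _) (P : MvPolynomial (Fin n ⊕ Unit) ℂ)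
    (hS : ∀ i, (S i).totalDegree ≤ q) (hQ : ∀ i, (Q i).totalDegree ≤ q)
    (hP : P.totalDegree ≤ p) (k : ℕ) :
    eval (asgn n p q S Q P) (genc n p q k) = constantCoeff ((DerOp S Q)^[k] P) := by
  have key : map (eval (asgn n p q S Q P)) ((DerOp (genS n p q) (genQ n p q))^[k] (genP n p q))
      = (DerOp S Q)^[k] P := by
    induction k with
    | zero => simpa using map_genP S Q P hP
    | succ k ih =>
        rw [Function.iterate_succ_apply', Function.iterate_succ_apply', map_DerOp, ih,
          funext (map_genS S Q P hS), funext (map_genQ S Q P hQ)]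
  rw [genc, ← key, constantCoeff_map]


lemma order_congr_fun {f g : ℂ → ℂ} (hf : AnalyticAt ℂ f 0) (hg : AnalyticAt ℂ g 0)
    (h : f = g) : analyticOrderAt f 0 = analyticOrderAt g 0 := by subst h; rfl

/-- (Gabrielov, introduction): For every `n ≥ 1`, `p ≥ 1`, `q ≥ 1` there is a bound `N(n,p,q)`
such that for any analytic germ `x(t) : (ℂ,0) → (ℂⁿ,0)` satisfying a system of algebraic
differential equations `Sᵢ(x(t),t) xᵢ'(t) = Qᵢ(x(t),t)` with `Sᵢ, Qᵢ` polynomial of degree at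
most `q` and `Sᵢ(0,0) ≠ 0`, and any polynomial `P(x,t)` of degree at most `p` with
`p(t) = P(x(t),t) ≢ 0`, the multiplicity of the zero of `p(t)` at `t = 0` is at most `N`.
(Variables are indexed by `Fin n ⊕ Unit`, the `Unit` index being the variable `t`.) -/
theorem exists_multiplicity_bound_for_ODE_system
    (n p q : ℕ) (hn : 1 ≤ n) (hp : 1 ≤ p) (hq : 1 ≤ q) :
    ∃ N : ℕ,
      ∀ (S Q : Fin n → MvPolynomial (Fin n ⊕ Unit) ℂ),
        (∀ i, (S i).totalDegree ≤ q) → (∀ i, (Q i).totalDegree ≤ q) →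
        (∀ i, eval (Sum.elim (0 : Fin n → ℂ) (fun _ => (0 : ℂ))) (S i) ≠ 0) →
        ∀ (x : ℂ → (Fin n → ℂ)), AnalyticAt ℂ x 0 → x 0 = 0 →
        (∀ᶠ t in nhds (0 : ℂ), ∀ i,
          eval (Sum.elim (x t) (fun _ => t)) (S i) * deriv (fun s => x s i) t =
            eval (Sum.elim (x t) (fun _ => t)) (Q i)) →
        ∀ (P : MvPolynomial (Fin n ⊕ Unit) ℂ), P.totalDegree ≤ p →
        ∀ (hcomp : AnalyticAt ℂ (fun t => eval (Sum.elim (x t) (fun _ => t)) P) 0),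
        (¬ ∀ᶠ t in nhds (0 : ℂ), eval (Sum.elim (x t) (fun _ => t)) P = 0) →
        analyticOrderAt (fun t => eval (Sum.elim (x t) (fun _ => t)) P) 0 ≤ (N : ℕ∞) := by
  obtain ⟨N, hN⟩ := exists_stab n p q
  refine ⟨N, ?_⟩
  intro S Q hSdeg hQdeg hS0 x hx hx0 hode P hPdeg hcomp hnz
  by_contra hord
  push_neg at hord
  set γ : ℂ → (Fin n ⊕ Unit) → ℂ := fun t => Sum.elim (x t) (fun _ => t) with hγdef
  have hγa : ∀ v, AnalyticAt ℂ (fun s => γ s v) 0 := by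
    rintro (i | u)
    · exact ((ContinuousLinearMap.proj i : (Fin n → ℂ) →L[ℂ] ℂ).analyticAt (x 0)).comp hx
    · exact analyticAt_id
  have hγ0 : γ 0 = 0 := by
    funext v
    cases v with
    | inl i => simp [hγdef, hx0]
    | inr u => simp [hγdef]
  set g : ℕ → ℂ → ℂ := fun k t => eval (γ t) ((DerOp S Q)^[k] P) with hgdef
  have hA : ∀ k, AnalyticAt ℂ (g k) 0 := fun k => analyticAt_eval_curve hγa _
  set u : ℂ → ℂ := fun t => eval (γ t) (∏ i, S i) with hudef
  have hua : AnalyticAt ℂ u 0 := analyticAt_eval_curve hγa _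
  have hzz : (Sum.elim (0 : Fin n → ℂ) (fun _ => (0 : ℂ))) = (0 : (Fin n ⊕ Unit) → ℂ) := by
    funext v; cases v <;> rfl
  have hu0 : u 0 ≠ 0 := by
    rw [hudef]
    simp only [hγ0, map_prod]
    rw [Finset.prod_ne_zero_iff]
    intro i _
    rw [← hzz]
    exact hS0 i
  have hstep : ∀ k, ∀ᶠ t in nhds (0:ℂ), g (k+1) t = u t * deriv (g k) t := by
    intro k
    filter_upwards [hode, hx.eventually_analyticAt] with t hodet hxt
    set γ' : (Fin n ⊕ Unit) → ℂ :=
      Sum.elim (fun i => deriv (fun s => x s i) t) (fun _ => 1) with hγ'def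
    have hd : ∀ v, HasDerivAt (fun s => γ s v) (γ' v) t := by
      rintro (i | w)
      · have hdiff : DifferentiableAt ℂ (fun s => x s i) t :=
          (((ContinuousLinearMap.proj i : (Fin n → ℂ) →L[ℂ] ℂ).analyticAt
            (x t)).comp hxt).differentiableAt
        exact hdiff.hasDerivAt
      · exact hasDerivAt_id t
    have hder := (hasDerivAt_eval_curve hd ((DerOp S Q)^[k] P)).deriv
    set F := (DerOp S Q)^[k] P with hF
    have hgk : deriv (g k) t = ∑ v, eval (γ t) (pderiv v F) * γ' v := hder
    have hgk1 : g (k+1) t = eval (γ t) (DerOp S Q F) := by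
      rw [hgdef]
      simp only [Function.iterate_succ_apply']
      rfl
    rw [hgk1, hgk]
    have hi : ∀ i : Fin n,
        u t * (eval (γ t) (pderiv (Sum.inl i) F) * γ' (Sum.inl i))
          = eval (γ t) (Q i * (∏ j ∈ Finset.univ.erase i, S j) * pderiv (Sum.inl i) F) := by
      intro i
      have hsplit : (∏ j, S j) = S i * ∏ j ∈ Finset.univ.erase i, S j :=
        (Finset.mul_prod_erase Finset.univ S (Finset.mem_univ i)).symm
      have h1 : u t = eval (γ t) (S i) * eval (γ t) (∏ j ∈ Finset.univ.erase i, S j) := by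
        rw [hudef]; simp only []; rw [hsplit, eval_mul]
      have h2 := hodet i
      simp only [hγ'def, Sum.elim_inl, eval_mul]
      rw [h1]
      calc eval (γ t) (S i) * eval (γ t) (∏ j ∈ Finset.univ.erase i, S j)
            * (eval (γ t) (pderiv (Sum.inl i) F) * deriv (fun s => x s i) t)
          = (eval (γ t) (S i) * deriv (fun s => x s i) t)
            * eval (γ t) (∏ j ∈ Finset.univ.erase i, S j)
            * eval (γ t) (pderiv (Sum.inl i) F) := by ring
        _ = _ := by rw [h2]
    rw [DerOp, eval_add, eval_mul, map_sum, Fintype.sum_sum_type]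
    rw [mul_add, Finset.mul_sum, Finset.sum_congr rfl (fun i _ => hi i)]
    have ht : (∑ w : Unit, eval (γ t) (pderiv (Sum.inr w) F) * γ' (Sum.inr w))
        = eval (γ t) (pderiv (Sum.inr ()) F) := by
      simp [hγ'def]
    rw [ht]
    have hut : eval (γ t) (∏ i, S i) = u t := by rw [hudef]
    rw [hut]
    ring
  obtain ⟨m, hm⟩ : ∃ m : ℕ, analyticOrderAt (fun t => eval (Sum.elim (x t) (fun _ => t)) P) 0 = (m : ℕ∞) := by
    have hne : analyticOrderAt (fun t => eval (Sum.elim (x t) (fun _ => t)) P) 0 ≠ ⊤ := fun h => hnz (analyticOrderAt_eq_top.mp h)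
    lift analyticOrderAt (fun t => eval (Sum.elim (x t) (fun _ => t)) P) 0 to ℕ using hne with m hm
    exact ⟨m, rfl⟩
  have hNm : N < m := by
    rw [hm] at hord
    exact_mod_cast hord
  have hg0 : g 0 = fun t => eval (Sum.elim (x t) (fun _ => t)) P := by
    funext t
    simp [hgdef, hγdef]
  have claim : ∀ k, k ≤ m → analyticOrderAt (g k) 0 = ((m - k : ℕ) : ℕ∞) := by
    intro k
    induction k with
    | zero =>
        intro _
        rw [order_congr_fun (hA 0) hcomp hg0, hm]
        simp
    | succ k ih =>
        intro hk1
        have hk : k ≤ m := by omega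
        have hmk : m - k = (m - (k+1)) + 1 := by omega
        exact order_step (hA k) (hA (k+1)) hua hu0 (hstep k) (m - (k+1))
          (by rw [ih hk, hmk])
  have hvanish : ∀ k, k < m → g k 0 = 0 := by
    intro k hk
    by_contra h0
    have h1 := (order_eq_zero_iff' (hA k)).mpr h0
    rw [claim k (le_of_lt hk)] at h1
    have : m - k = 0 := by exact_mod_cast h1
    omega
  have hphi : ∀ k, eval (asgn n p q S Q P) (genc n p q k) = g k 0 := by
    intro k
    rw [eval_genc S Q P hSdeg hQdeg hPdeg k, hgdef]
    simp only [hγ0]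
    rw [eval_zero]
  have hmz : eval (asgn n p q S Q P) (genc n p q m) = 0 := by
    have hsub : Ideal.span (genc n p q '' Set.Iio N)
        ≤ RingHom.ker (eval (asgn n p q S Q P) :
            MvPolynomial (GVar n p q) ℂ →+* ℂ) := by
      rw [Ideal.span_le]
      rintro _ ⟨k, hk, rfl⟩
      have : g k 0 = 0 := hvanish k (lt_trans hk hNm)
      simpa [RingHom.mem_ker, hphi k] using this
    exact hsub (hN m)
  have h1 : g m 0 = 0 := by rw [← hphi m]; exact hmz
  have h2 : analyticOrderAt (g m) 0 = ((0:ℕ) : ℕ∞) := by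
    rw [claim m le_rfl]
    simp
  exact ((order_eq_zero_iff' (hA m)).mp (by exact_mod_cast h2)) h1
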